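/- Let γ ∈ (−1,0) ∪ (0,1). Then the function F_{2,γ} satisfies: (i) for every t ∈ (0,∞) with t ≠ 1, F_{2,γ} is differentiable at t with F_{2,γ}'(t) = −[(3+(2+γ²)t²+3t⁴)(|1−t|^γ − (1+t)^γ) + 3γ t (1+t²)(|1−t|^γ + (1+t)^γ)]/(γ(2+γ)(4+γ) t⁴); (ii) F_{2,γ}'(1/t) = t^{4−γ} F_{2,γ}'(t) for all t ∈ (0,∞) with t ≠ 1; (iii) lim_{t→0+} F_{2,γ}(t) = 0 and lim_{t→0+} F_{2,γ}'(t) = 0; (iv) lim_{t→+∞} F_{2,γ}(t) = 2(2−γ)/(3(1+γ)); (v) F_{2,γ}'(t) > 0 for every t ∈ (0,∞) with t ≠ 1; (vi) for every t ∈ (0,∞) with t ≠ 1, F_{2,γ} satisfies the ODE t F_{2,γ}'(t) − (1+γ) F_{2,γ}(t) = t^{−1} F_{1,γ}'(t) − 2(2−γ)/3. -/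

import Mathlib

open Real Set Filter Topology

noncomputable section

namespace GSQGaux

/-- The auxiliary function `F_{1,γ}`. -/
def F1 (γ t : ℝ) : ℝ :=
  (2*γ*(2+γ)*t - (1+γ-t)*(1+t)*(1+t)^γ + (1-t)*(1+γ+t)*|1-t|^γ) /
    (γ*(1+γ)*(2+γ)*t)

/-- The auxiliary function `F_{2,γ}`. -/
def F2 (γ t : ℝ) : ℝ :=
  (1/(3*γ*(1+γ)*(2+γ)*(4+γ)*t^3)) *
    (2*γ*(2-γ)*(2+γ)*(4+γ)*t^3
      + 3*(1+γ+(2+γ-γ^2)*t^2 - 3*t^4)*(|1-t|^γ - (1+t)^γ)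
      + 3*((γ+γ^2)*t - 3*γ*t^3)*(|1-t|^γ + (1+t)^γ))

/-- The explicit formula for the derivative of `F_{2,γ}`:
`F_{2,γ}'(t) = -[(3+(2+γ²)t²+3t⁴)(|1-t|^γ - (1+t)^γ) + 3γt(1+t²)(|1-t|^γ + (1+t)^γ)]
  / (γ(2+γ)(4+γ)t⁴)`. -/
def F2d (γ t : ℝ) : ℝ :=
  -(((3+(2+γ^2)*t^2+3*t^4)*(|1-t|^γ - (1+t)^γ)
      + 3*γ*t*(1+t^2)*(|1-t|^γ + (1+t)^γ)) / (γ*(2+γ)*(4+γ)*t^4))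


def F1d (γ t : ℝ) : ℝ :=
  ((1+t^2-γ*t)*(1+t)^γ - (1+t^2+γ*t)*|1-t|^γ)/(γ*(2+γ)*t^2)

def Us (γ s : ℝ) : ℝ := ((1-s)^γ - (1+s)^γ + 2*γ*s + γ*(γ-1)*(γ-2)/3*s^3)/s^4
def Ws (γ s : ℝ) : ℝ := ((1-s)^γ + (1+s)^γ - 2 - γ*(γ-1)*s^2)/s^3

lemma hasDerivAt_absrpow (γ : ℝ) {t : ℝ} (ht : t ≠ 1) :
    HasDerivAt (fun s : ℝ => |1-s|^γ) (γ*|1-t|^γ/(t-1)) t := by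
  have h0 : (1:ℝ) - t ≠ 0 := sub_ne_zero.mpr (Ne.symm ht)
  have h1 : HasDerivAt (fun s : ℝ => 1 - s) (-1) t := (hasDerivAt_id t).const_sub 1
  have h2 : HasDerivAt (fun s : ℝ => (1-s)^2) (2*(1-t)^1*(-1)) t := h1.pow 2
  have h3 : ((1:ℝ)-t)^2 ≠ 0 := pow_ne_zero 2 h0
  have h4 := h2.rpow_const (p := γ/2) (Or.inl h3)
  have key : (fun s : ℝ => |1-s|^γ) = fun s : ℝ => ((1-s)^2)^(γ/2) := by
    funext s
    rw [← sq_abs, ← Real.rpow_natCast |1-s| 2, ← Real.rpow_mul (abs_nonneg _)]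
    congr 1; push_cast; ring
  rw [key]
  convert h4 using 1
  have habs : |1-t| > 0 := abs_pos.mpr h0
  rw [← sq_abs (1-t), ← Real.rpow_natCast |1-t| 2, ← Real.rpow_mul (abs_nonneg _),
    show ((2:ℕ):ℝ)*(γ/2-1) = γ-2 by push_cast; ring,
    Real.rpow_sub habs, show (2:ℝ) = ((2:ℕ):ℝ) by norm_num,
    Real.rpow_natCast, sq_abs]
  have h6 : t - 1 ≠ 0 := sub_ne_zero.mpr ht
  field_simp
  nlinarith [sq_abs (1-t), sq_nonneg (1-t)]

lemma hasDerivAt_oneaddrpow (γ : ℝ) {t : ℝ} (ht : (0:ℝ) < 1 + t) :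
    HasDerivAt (fun s : ℝ => (1+s)^γ) (γ*(1+t)^γ/(1+t)) t := by
  have h1 : HasDerivAt (fun s : ℝ => 1 + s) 1 t := (hasDerivAt_id t).const_add 1
  have h4 := h1.rpow_const (p := γ) (Or.inl (ne_of_gt ht))
  convert h4 using 1
  rw [Real.rpow_sub_one (ne_of_gt ht)]
  field_simp


lemma hasDerivAt_oneSub (p : ℝ) {s : ℝ} (hs : s < 1) :
    HasDerivAt (fun x : ℝ => (1-x)^p) (-(p*(1-s)^(p-1))) s := by
  have h1 : HasDerivAt (fun x : ℝ => 1-x) (-1) s := (hasDerivAt_id' (𝕜 := ℝ) (x := s)).const_sub 1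
  have := h1.rpow_const (p := p) (Or.inl (by intro h; linarith [(sub_eq_zero.mp h)] : (1:ℝ)-s ≠ 0))
  convert this using 1; ring

lemma hasDerivAt_oneAdd (p : ℝ) {s : ℝ} (hs : -1 < s) :
    HasDerivAt (fun x : ℝ => (1+x)^p) (p*(1+s)^(p-1)) s := by
  have h1 : HasDerivAt (fun x : ℝ => 1+x) 1 s := (hasDerivAt_id' (𝕜 := ℝ) (x := s)).const_add 1
  have := h1.rpow_const (p := p) (Or.inl (ne_of_gt (by linarith : (0:ℝ) < 1+s)))
  convert this using 1; ring

lemma tendsto_oneSub_rpow (p : ℝ) : Tendsto (fun s : ℝ => (1-s)^p) (𝓝 0) (𝓝 1) := by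
  have h : ContinuousAt (fun s : ℝ => (1-s)^p) 0 :=
    (continuousAt_const.sub continuousAt_id).rpow_const (Or.inl (by norm_num))
  simpa [Real.one_rpow] using h.tendsto

lemma tendsto_oneAdd_rpow (p : ℝ) : Tendsto (fun s : ℝ => (1+s)^p) (𝓝 0) (𝓝 1) := by
  have h : ContinuousAt (fun s : ℝ => (1+s)^p) 0 :=
    (continuousAt_const.add continuousAt_id).rpow_const (Or.inl (by norm_num))
  simpa [Real.one_rpow] using h.tendsto


lemma tendsto_zero_of_contvalue {f : ℝ → ℝ} (h : ContinuousAt f 0) (h0 : f 0 = 0) :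
    Tendsto f (𝓝[>] (0:ℝ)) (𝓝 0) := by
  simpa [h0] using h.tendsto.mono_left (nhdsWithin_le_nhds)

lemma coreW_raw (γ : ℝ) :
    Tendsto (fun s : ℝ => ((1-s)^γ + (1+s)^γ - 2 - γ*(γ-1)*s^2)/s^3) (𝓝[>] 0) (𝓝 0) := by
  have hI : (0:ℝ) < 1/2 := by norm_num
  have hmem : ∀ x ∈ Ioo (0:ℝ) (1/2), -1 < x ∧ x < 1 :=
    fun x hx => ⟨by linarith [hx.1], by linarith [hx.2]⟩
  set f0 : ℝ → ℝ := fun s => (1-s)^γ + (1+s)^γ - 2 - γ*(γ-1)*s^2 with hf0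
  set f1 : ℝ → ℝ := fun s => -(γ*(1-s)^(γ-1)) + γ*(1+s)^(γ-1) - γ*(γ-1)*(2*s) with hf1
  set f2 : ℝ → ℝ := fun s => γ*(γ-1)*(1-s)^(γ-2) + γ*(γ-1)*(1+s)^(γ-2) - γ*(γ-1)*2 with hf2
  set f3 : ℝ → ℝ := fun s => -(γ*(γ-1)*(γ-2)*(1-s)^(γ-3)) + γ*(γ-1)*(γ-2)*(1+s)^(γ-3) with hf3
  have d0 : ∀ x ∈ Ioo (0:ℝ) (1/2), HasDerivAt f0 (f1 x) x := by
    intro x hx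
    have h := (((hasDerivAt_oneSub γ (hmem x hx).2).add
      (hasDerivAt_oneAdd γ (hmem x hx).1)).sub_const 2).sub
      ((hasDerivAt_pow 2 x).const_mul (γ*(γ-1)))
    refine h.congr_deriv ?_
    push_cast; ring
  have d1 : ∀ x ∈ Ioo (0:ℝ) (1/2), HasDerivAt f1 (f2 x) x := by
    intro x hx
    have h := ((((hasDerivAt_oneSub (γ-1) (hmem x hx).2).const_mul γ).neg).add
      ((hasDerivAt_oneAdd (γ-1) (hmem x hx).1).const_mul γ)).sub
      (((hasDerivAt_id' (𝕜 := ℝ) (x := x)).const_mul 2).const_mul (γ*(γ-1)))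
    rw [show γ-1-1 = γ-2 by ring] at h
    refine h.congr_deriv ?_
    ring
  have d2 : ∀ x ∈ Ioo (0:ℝ) (1/2), HasDerivAt f2 (f3 x) x := by
    intro x hx
    have h := (((hasDerivAt_oneSub (γ-2) (hmem x hx).2).const_mul (γ*(γ-1))).add
      ((hasDerivAt_oneAdd (γ-2) (hmem x hx).1).const_mul (γ*(γ-1)))).sub_const (γ*(γ-1)*2)
    rw [show γ-2-1 = γ-3 by ring] at h
    refine h.congr_deriv ?_
    ring
  have c0 : Tendsto f0 (𝓝[>] (0:ℝ)) (𝓝 0) := by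
    apply tendsto_zero_of_contvalue
    · exact ((((continuousAt_const.sub continuousAt_id).rpow_const (Or.inl (by norm_num))).add
        ((continuousAt_const.add continuousAt_id).rpow_const (Or.inl (by norm_num)))).sub_const 2).sub
        (continuousAt_const.mul ((continuousAt_id.pow 2)))
    · norm_num [hf0, Real.one_rpow]
  have c1 : Tendsto f1 (𝓝[>] (0:ℝ)) (𝓝 0) := by
    apply tendsto_zero_of_contvalue
    · exact (((((continuousAt_const.sub continuousAt_id).rpow_const (Or.inl (by norm_num))).const_mul γ).neg).add
        (((continuousAt_const.add continuousAt_id).rpow_const (Or.inl (by norm_num))).const_mul γ)).sub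
        (continuousAt_const.mul (continuousAt_const.mul continuousAt_id))
    · simp [hf1, Real.one_rpow]
  have c2 : Tendsto f2 (𝓝[>] (0:ℝ)) (𝓝 0) := by
    apply tendsto_zero_of_contvalue
    · exact ((((continuousAt_const.sub continuousAt_id).rpow_const (Or.inl (by norm_num))).const_mul _).add
        (((continuousAt_const.add continuousAt_id).rpow_const (Or.inl (by norm_num))).const_mul _)).sub_const _
    · simp [hf2, Real.one_rpow]; ring
  have c3 : Tendsto (fun x => f3 x / 6) (𝓝[>] (0:ℝ)) (𝓝 0) := by
    apply tendsto_zero_of_contvalue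
    · exact (((((continuousAt_const.sub continuousAt_id).rpow_const (Or.inl (by norm_num))).const_mul _).neg).add
        (((continuousAt_const.add continuousAt_id).rpow_const (Or.inl (by norm_num))).const_mul _)).div_const 6
    · simp [hf3, Real.one_rpow]
  have L3 : Tendsto (fun x => f2 x / (6*x)) (𝓝[>] (0:ℝ)) (𝓝 0) := by
    refine HasDerivAt.lhopital_zero_right_on_Ioo hI d2 (g' := fun _ => 6)
      (fun x hx => by simpa using (hasDerivAt_id' (𝕜 := ℝ) (x := x)).const_mul 6) ?_ c2 ?_ c3
    · intro x hx; norm_num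
    · apply tendsto_zero_of_contvalue (continuousAt_const.mul continuousAt_id) (by simp)
  have L2 : Tendsto (fun x => f1 x / (3*x^2)) (𝓝[>] (0:ℝ)) (𝓝 0) := by
    refine HasDerivAt.lhopital_zero_right_on_Ioo hI d1 (g' := fun x => 6*x) ?_ ?_ c1 ?_ L3
    · intro x hx
      have h := (hasDerivAt_pow 2 x).const_mul 3
      refine h.congr_deriv ?_ <;> push_cast <;> ring_nf
    · intro x hx; have := hx.1; positivity
    · apply tendsto_zero_of_contvalue (continuousAt_const.mul (continuousAt_id.pow 2)) (by simp)
  have L1 : Tendsto (fun x => f0 x / x^3) (𝓝[>] (0:ℝ)) (𝓝 0) := by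
    refine HasDerivAt.lhopital_zero_right_on_Ioo hI d0 (g' := fun x => 3*x^2) ?_ ?_ c0 ?_ L2
    · intro x hx
      have h := hasDerivAt_pow 3 x
      refine h.congr_deriv ?_ <;> push_cast <;> ring_nf
    · intro x hx; have := hx.1; positivity
    · apply tendsto_zero_of_contvalue (continuousAt_id.pow 3) (by simp)
  exact L1


lemma coreU_raw (γ : ℝ) :
    Tendsto (fun s : ℝ => ((1-s)^γ - (1+s)^γ + 2*γ*s + γ*(γ-1)*(γ-2)/3*s^3)/s^4)
      (𝓝[>] 0) (𝓝 0) := by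
  have hI : (0:ℝ) < 1/2 := by norm_num
  have hmem : ∀ x ∈ Ioo (0:ℝ) (1/2), -1 < x ∧ x < 1 :=
    fun x hx => ⟨by linarith [hx.1], by linarith [hx.2]⟩
  set f0 : ℝ → ℝ := fun s => (1-s)^γ - (1+s)^γ + 2*γ*s + γ*(γ-1)*(γ-2)/3*s^3 with hf0
  set f1 : ℝ → ℝ := fun s => -(γ*(1-s)^(γ-1)) - γ*(1+s)^(γ-1) + 2*γ + γ*(γ-1)*(γ-2)*s^2 with hf1
  set f2 : ℝ → ℝ := fun s => γ*(γ-1)*(1-s)^(γ-2) - γ*(γ-1)*(1+s)^(γ-2) + γ*(γ-1)*(γ-2)*(2*s) with hf2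
  set f3 : ℝ → ℝ := fun s => -(γ*(γ-1)*(γ-2)*(1-s)^(γ-3)) - γ*(γ-1)*(γ-2)*(1+s)^(γ-3) + γ*(γ-1)*(γ-2)*2 with hf3
  set f4 : ℝ → ℝ := fun s => γ*(γ-1)*(γ-2)*(γ-3)*(1-s)^(γ-4) - γ*(γ-1)*(γ-2)*(γ-3)*(1+s)^(γ-4) with hf4
  have d0 : ∀ x ∈ Ioo (0:ℝ) (1/2), HasDerivAt f0 (f1 x) x := by
    intro x hx
    have h := (((hasDerivAt_oneSub γ (hmem x hx).2).sub
      (hasDerivAt_oneAdd γ (hmem x hx).1)).add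
      ((hasDerivAt_id' (𝕜 := ℝ) (x := x)).const_mul (2*γ))).add
      ((hasDerivAt_pow 3 x).const_mul (γ*(γ-1)*(γ-2)/3))
    refine h.congr_deriv ?_
    push_cast; ring
  have d1 : ∀ x ∈ Ioo (0:ℝ) (1/2), HasDerivAt f1 (f2 x) x := by
    intro x hx
    have h := ((((hasDerivAt_oneSub (γ-1) (hmem x hx).2).const_mul γ).neg).sub
      ((hasDerivAt_oneAdd (γ-1) (hmem x hx).1).const_mul γ)).add_const (2*γ) |>.add
      ((hasDerivAt_pow 2 x).const_mul (γ*(γ-1)*(γ-2)))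
    rw [show γ-1-1 = γ-2 by ring] at h
    refine h.congr_deriv ?_
    push_cast; ring
  have d2 : ∀ x ∈ Ioo (0:ℝ) (1/2), HasDerivAt f2 (f3 x) x := by
    intro x hx
    have h := (((hasDerivAt_oneSub (γ-2) (hmem x hx).2).const_mul (γ*(γ-1))).sub
      ((hasDerivAt_oneAdd (γ-2) (hmem x hx).1).const_mul (γ*(γ-1)))).add
      (((hasDerivAt_id' (𝕜 := ℝ) (x := x)).const_mul 2).const_mul (γ*(γ-1)*(γ-2)))
    rw [show γ-2-1 = γ-3 by ring] at h
    refine h.congr_deriv ?_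
    ring
  have d3 : ∀ x ∈ Ioo (0:ℝ) (1/2), HasDerivAt f3 (f4 x) x := by
    intro x hx
    have h := ((((hasDerivAt_oneSub (γ-3) (hmem x hx).2).const_mul (γ*(γ-1)*(γ-2))).neg).sub
      ((hasDerivAt_oneAdd (γ-3) (hmem x hx).1).const_mul (γ*(γ-1)*(γ-2)))).add_const (γ*(γ-1)*(γ-2)*2)
    rw [show γ-3-1 = γ-4 by ring] at h
    refine h.congr_deriv ?_
    ring
  have c0 : Tendsto f0 (𝓝[>] (0:ℝ)) (𝓝 0) := by
    apply tendsto_zero_of_contvalue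
    · exact ((((continuousAt_const.sub continuousAt_id).rpow_const (Or.inl (by norm_num))).sub
        ((continuousAt_const.add continuousAt_id).rpow_const (Or.inl (by norm_num)))).add
        (continuousAt_const.mul continuousAt_id)).add
        (continuousAt_const.mul (continuousAt_id.pow 3))
    · norm_num [hf0, Real.one_rpow]
  have c1 : Tendsto f1 (𝓝[>] (0:ℝ)) (𝓝 0) := by
    apply tendsto_zero_of_contvalue
    · exact ((((((continuousAt_const.sub continuousAt_id).rpow_const (Or.inl (by norm_num))).const_mul γ).neg).sub
        (((continuousAt_const.add continuousAt_id).rpow_const (Or.inl (by norm_num))).const_mul γ)).add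
        continuousAt_const).add (continuousAt_const.mul (continuousAt_id.pow 2))
    · norm_num [hf1, Real.one_rpow]; ring
  have c2 : Tendsto f2 (𝓝[>] (0:ℝ)) (𝓝 0) := by
    apply tendsto_zero_of_contvalue
    · exact ((((continuousAt_const.sub continuousAt_id).rpow_const (Or.inl (by norm_num))).const_mul _).sub
        (((continuousAt_const.add continuousAt_id).rpow_const (Or.inl (by norm_num))).const_mul _)).add
        (continuousAt_const.mul (continuousAt_const.mul continuousAt_id))
    · norm_num [hf2, Real.one_rpow]
  have c3 : Tendsto f3 (𝓝[>] (0:ℝ)) (𝓝 0) := by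
    apply tendsto_zero_of_contvalue
    · exact (((((continuousAt_const.sub continuousAt_id).rpow_const (Or.inl (by norm_num))).const_mul _).neg).sub
        (((continuousAt_const.add continuousAt_id).rpow_const (Or.inl (by norm_num))).const_mul _)).add_const _
    · norm_num [hf3, Real.one_rpow]; ring
  have c4 : Tendsto (fun x => f4 x / 24) (𝓝[>] (0:ℝ)) (𝓝 0) := by
    apply tendsto_zero_of_contvalue
    · exact ((((continuousAt_const.sub continuousAt_id).rpow_const (Or.inl (by norm_num))).const_mul _).sub
        (((continuousAt_const.add continuousAt_id).rpow_const (Or.inl (by norm_num))).const_mul _)).div_const 24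
    · norm_num [hf4, Real.one_rpow]
  have L4 : Tendsto (fun x => f3 x / (24*x)) (𝓝[>] (0:ℝ)) (𝓝 0) := by
    refine HasDerivAt.lhopital_zero_right_on_Ioo hI d3 (g' := fun _ => 24)
      (fun x hx => by simpa using (hasDerivAt_id' (𝕜 := ℝ) (x := x)).const_mul 24) ?_ c3 ?_ c4
    · intro x hx; norm_num
    · exact tendsto_zero_of_contvalue (continuousAt_const.mul continuousAt_id) (by simp)
  have L3 : Tendsto (fun x => f2 x / (12*x^2)) (𝓝[>] (0:ℝ)) (𝓝 0) := by
    refine HasDerivAt.lhopital_zero_right_on_Ioo hI d2 (g' := fun x => 24*x) ?_ ?_ c2 ?_ L4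
    · intro x hx
      have h := (hasDerivAt_pow 2 x).const_mul 12
      refine h.congr_deriv ?_ <;> push_cast <;> ring_nf
    · intro x hx; have := hx.1; positivity
    · exact tendsto_zero_of_contvalue (continuousAt_const.mul (continuousAt_id.pow 2)) (by simp)
  have L2 : Tendsto (fun x => f1 x / (4*x^3)) (𝓝[>] (0:ℝ)) (𝓝 0) := by
    refine HasDerivAt.lhopital_zero_right_on_Ioo hI d1 (g' := fun x => 12*x^2) ?_ ?_ c1 ?_ L3
    · intro x hx
      have h := (hasDerivAt_pow 3 x).const_mul 4
      refine h.congr_deriv ?_ <;> push_cast <;> ring_nf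
    · intro x hx; have := hx.1; positivity
    · exact tendsto_zero_of_contvalue (continuousAt_const.mul (continuousAt_id.pow 3)) (by simp)
  have L1 : Tendsto (fun x => f0 x / x^4) (𝓝[>] (0:ℝ)) (𝓝 0) := by
    refine HasDerivAt.lhopital_zero_right_on_Ioo hI d0 (g' := fun x => 4*x^3) ?_ ?_ c0 ?_ L2
    · intro x hx
      have h := hasDerivAt_pow 4 x
      refine h.congr_deriv ?_ <;> push_cast <;> ring_nf
    · intro x hx; have := hx.1; positivity
    · exact tendsto_zero_of_contvalue (continuousAt_id.pow 4) (by simp)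
  exact L1


lemma coreU (γ : ℝ) : Tendsto (fun s : ℝ => Us γ s) (𝓝[>] 0) (𝓝 0) := by
  unfold Us; exact coreU_raw γ

lemma coreW (γ : ℝ) : Tendsto (fun s : ℝ => Ws γ s) (𝓝[>] 0) (𝓝 0) := by
  unfold Ws; exact coreW_raw γ

lemma hasDerivAt_F2 {γ : ℝ} (hγ1 : -1 < γ) (hγ2 : γ < 1) (hγ0 : γ ≠ 0)
    {t : ℝ} (ht : 0 < t) (ht1 : t ≠ 1) :
    HasDerivAt (F2 γ) (F2d γ t) t := by
  have hγa : 1 + γ ≠ 0 := by linarith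
  have hγb : 2 + γ ≠ 0 := by linarith
  have hγc : 4 + γ ≠ 0 := by linarith
  have ht0 : t ≠ 0 := ne_of_gt ht
  have ht1' : t - 1 ≠ 0 := sub_ne_zero.mpr ht1
  have ht2 : (0:ℝ) < 1 + t := by linarith
  have ht2' : (1:ℝ) + t ≠ 0 := ne_of_gt ht2
  have ha := hasDerivAt_absrpow γ ht1
  have hb := hasDerivAt_oneaddrpow γ ht2
  have hD : HasDerivAt (fun s : ℝ => 3*γ*(1+γ)*(2+γ)*(4+γ)*s^3)
      (3*γ*(1+γ)*(2+γ)*(4+γ)*(3*t^2)) t := by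
    simpa using (hasDerivAt_pow 3 t).const_mul (3*γ*(1+γ)*(2+γ)*(4+γ))
  have hDne : 3*γ*(1+γ)*(2+γ)*(4+γ)*t^3 ≠ 0 := by positivity
  have hq : HasDerivAt (fun s : ℝ => 1/(3*γ*(1+γ)*(2+γ)*(4+γ)*s^3))
      ((0*(3*γ*(1+γ)*(2+γ)*(4+γ)*t^3) - 1*(3*γ*(1+γ)*(2+γ)*(4+γ)*(3*t^2)))
        /(3*γ*(1+γ)*(2+γ)*(4+γ)*t^3)^2) t :=
    (hasDerivAt_const t 1).div hD hDne
  have hA : HasDerivAt (fun s : ℝ => 3*(1+γ+(2+γ-γ^2)*s^2 - 3*s^4))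
      (3*((2+γ-γ^2)*(2*t) - 3*(4*t^3))) t := by
    have := ((((hasDerivAt_pow 2 t).const_mul (2+γ-γ^2)).const_add (1+γ)).sub
      ((hasDerivAt_pow 4 t).const_mul 3)).const_mul 3
    refine this.congr_deriv ?_
    ring
  have hB : HasDerivAt (fun s : ℝ => 3*((γ+γ^2)*s - 3*γ*s^3))
      (3*((γ+γ^2) - 3*γ*(3*t^2))) t := by
    have := ((hasDerivAt_id' (𝕜 := ℝ) (x := t)).const_mul (γ+γ^2)).sub
      ((hasDerivAt_pow 3 t).const_mul (3*γ)) |>.const_mul 3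
    refine this.congr_deriv ?_
    ring
  have hK : HasDerivAt (fun s : ℝ => 2*γ*(2-γ)*(2+γ)*(4+γ)*s^3)
      (2*γ*(2-γ)*(2+γ)*(4+γ)*(3*t^2)) t := by
    simpa using (hasDerivAt_pow 3 t).const_mul (2*γ*(2-γ)*(2+γ)*(4+γ))
  have hnum := (hK.add ((hA.mul (ha.sub hb)))).add (hB.mul (ha.add hb))
  have H := hq.mul hnum
  simp only [Pi.add_apply, Pi.sub_apply, Pi.mul_apply, Pi.neg_apply, Pi.div_apply] at H
  refine H.congr_deriv ?_
  unfold F2d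
  have habs : (0:ℝ) < |1-t| := abs_pos.mpr (by intro h; apply ht1; linarith)
  set A := |1-t|^γ with hAdef
  set B := (1+t)^γ with hBdef
  field_simp
  ring

lemma hasDerivAt_F1' {γ : ℝ} (hγ1 : -1 < γ) (hγ0 : γ ≠ 0)
    {t : ℝ} (ht : 0 < t) (ht1 : t ≠ 1) :
    HasDerivAt (F1 γ) (F1d γ t) t := by
  have hγa : 1 + γ ≠ 0 := by linarith
  have hγb : 2 + γ ≠ 0 := by linarith
  have ht0 : t ≠ 0 := ne_of_gt ht
  have ht1' : t - 1 ≠ 0 := sub_ne_zero.mpr ht1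
  have ht2 : (0:ℝ) < 1 + t := by linarith
  have ht2' : (1:ℝ) + t ≠ 0 := ne_of_gt ht2
  have ha := hasDerivAt_absrpow γ ht1
  have hb := hasDerivAt_oneaddrpow γ ht2
  have hc : HasDerivAt (fun s : ℝ => 2*γ*(2+γ)*s) (2*γ*(2+γ)*1) t :=
    (hasDerivAt_id' (𝕜 := ℝ) (x := t)).const_mul (2*γ*(2+γ))
  have hP1 : HasDerivAt (fun s : ℝ => (1+γ-s)*(1+s)) ((-1)*(1+t) + (1+γ-t)*1) t :=
    ((hasDerivAt_id' (𝕜 := ℝ) (x := t)).const_sub (1+γ)).mul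
      ((hasDerivAt_id' (𝕜 := ℝ) (x := t)).const_add 1)
  have hP2 : HasDerivAt (fun s : ℝ => (1-s)*(1+γ+s)) ((-1)*(1+γ+t) + (1-t)*1) t :=
    ((hasDerivAt_id' (𝕜 := ℝ) (x := t)).const_sub 1).mul
      ((hasDerivAt_id' (𝕜 := ℝ) (x := t)).const_add (1+γ))
  have hY : HasDerivAt (fun s : ℝ => γ*(1+γ)*(2+γ)*s) (γ*(1+γ)*(2+γ)*1) t :=
    (hasDerivAt_id' (𝕜 := ℝ) (x := t)).const_mul (γ*(1+γ)*(2+γ))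
  have hYne : γ*(1+γ)*(2+γ)*t ≠ 0 := by positivity
  have H := ((hc.sub (hP1.mul hb)).add (hP2.mul ha)).div hY hYne
  simp only [Pi.add_apply, Pi.sub_apply, Pi.mul_apply, Pi.neg_apply, Pi.div_apply] at H
  refine H.congr_deriv ?_
  unfold F1d
  have habs : (0:ℝ) < |1-t| := abs_pos.mpr (by intro h; apply ht1; linarith)
  set A := |1-t|^γ
  set B := (1+t)^γ
  field_simp
  ring

lemma part_ii {γ : ℝ} (hγ1 : -1 < γ) (hγ2 : γ < 1) (hγ0 : γ ≠ 0)
    {t : ℝ} (ht : 0 < t) (ht1 : t ≠ 1) :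
    F2d γ (1/t) = t ^ (4 - γ) * F2d γ t := by
  have hγb : 2 + γ ≠ 0 := by linarith
  have hγc : 4 + γ ≠ 0 := by linarith
  have ht0 : t ≠ 0 := ne_of_gt ht
  have ht2 : (0:ℝ) < 1 + t := by linarith
  have habs : (0:ℝ) < |1-t| := abs_pos.mpr (by intro h; apply ht1; linarith)
  have e1 : |1-1/t| ^ γ = |1-t|^γ / t^γ := by
    rw [show (1:ℝ)-1/t = (t-1)/t by field_simp, abs_div, abs_of_pos ht,
      Real.div_rpow (abs_nonneg _) (le_of_lt ht), abs_sub_comm]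
  have e2 : ((1:ℝ)+1/t) ^ γ = (1+t)^γ / t^γ := by
    rw [show (1:ℝ)+1/t = (1+t)/t by field_simp; ring,
      Real.div_rpow (le_of_lt ht2) (le_of_lt ht)]
  have e3 : t ^ (4-γ) = t^(4:ℕ) / t^γ := by
    rw [Real.rpow_sub ht, show (4:ℝ) = ((4:ℕ):ℝ) by norm_num, Real.rpow_natCast]
  have htγ : t ^ γ ≠ 0 := ne_of_gt (Real.rpow_pos_of_pos ht γ)
  unfold F2d
  rw [e1, e2, e3]
  set A := |1-t|^γ
  set B := (1+t)^γ
  set T := t^γ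
  field_simp
  ring

lemma part_vi {γ : ℝ} (hγ1 : -1 < γ) (hγ2 : γ < 1) (hγ0 : γ ≠ 0)
    {t : ℝ} (ht : 0 < t) (ht1 : t ≠ 1) :
    t * F2d γ t - (1+γ) * F2 γ t = t⁻¹ * F1d γ t - 2*(2-γ)/3 := by
  have hγa : 1 + γ ≠ 0 := by linarith
  have hγb : 2 + γ ≠ 0 := by linarith
  have hγc : 4 + γ ≠ 0 := by linarith
  have ht0 : t ≠ 0 := ne_of_gt ht
  unfold F1d F2 F2d
  set A := |1-t|^γ
  set B := (1+t)^γ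
  field_simp
  ring
lemma mem01 : Ioo (0:ℝ) 1 ∈ 𝓝[>] (0:ℝ) :=
  Ioo_mem_nhdsGT_of_mem (left_mem_Ico.mpr one_pos)

lemma tendsto_F2_zero {γ : ℝ} (hγ1 : -1 < γ) (hγ2 : γ < 1) (hγ0 : γ ≠ 0) :
    Tendsto (F2 γ) (𝓝[>] (0:ℝ)) (𝓝 0) := by
  have hγa : 1 + γ ≠ 0 := by linarith
  have hγb : 2 + γ ≠ 0 := by linarith
  have hγc : 4 + γ ≠ 0 := by linarith
  have hU := coreU γ
  have hW := coreW γ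
  have hid : Tendsto (fun s : ℝ => s) (𝓝[>] (0:ℝ)) (𝓝 0) :=
    tendsto_id.mono_left nhdsWithin_le_nhds
  have hfac : Tendsto (fun s : ℝ =>
      3*(1+γ)*Us γ s + 3*γ*(1+γ)*Ws γ s + (14*γ+13*γ^2-6*γ^3-4*γ^4+γ^5)*s
        + ((6+3*γ-3*γ^2)*Us γ s - 9*γ*Ws γ s)*s^2 + (6*γ-9*γ^2+3*γ^3)*s^3
        - 9*(Us γ s*s^4)) (𝓝[>] (0:ℝ)) (𝓝 0) := by
    have h := (((((hU.const_mul (3*(1+γ))).add (hW.const_mul (3*γ*(1+γ)))).add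
      (hid.const_mul (14*γ+13*γ^2-6*γ^3-4*γ^4+γ^5))).add
      (((hU.const_mul (6+3*γ-3*γ^2)).sub (hW.const_mul (9*γ))).mul (hid.pow 2))).add
      ((hid.pow 3).const_mul (6*γ-9*γ^2+3*γ^3))).sub ((hU.mul (hid.pow 4)).const_mul 9)
    convert h using 2 <;> norm_num
  have hmain : Tendsto (fun s : ℝ => s/(3*γ*(1+γ)*(2+γ)*(4+γ)) *
      (3*(1+γ)*Us γ s + 3*γ*(1+γ)*Ws γ s + (14*γ+13*γ^2-6*γ^3-4*γ^4+γ^5)*s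
        + ((6+3*γ-3*γ^2)*Us γ s - 9*γ*Ws γ s)*s^2 + (6*γ-9*γ^2+3*γ^3)*s^3
        - 9*(Us γ s*s^4))) (𝓝[>] (0:ℝ)) (𝓝 0) := by
    have h := (hid.div_const (3*γ*(1+γ)*(2+γ)*(4+γ))).mul hfac
    simpa using h
  apply hmain.congr'
  filter_upwards [mem01] with s hs
  have hs0 : (0:ℝ) < s := hs.1
  have hs0' : s ≠ 0 := ne_of_gt hs0
  have hs1 : (0:ℝ) < 1 - s := by linarith [hs.2]
  unfold F2 Us Ws
  rw [abs_of_pos hs1]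
  field_simp
  ring


lemma tendsto_F2d_zero {γ : ℝ} (hγ1 : -1 < γ) (hγ2 : γ < 1) (hγ0 : γ ≠ 0) :
    Tendsto (F2d γ) (𝓝[>] (0:ℝ)) (𝓝 0) := by
  have hγb : 2 + γ ≠ 0 := by linarith
  have hγc : 4 + γ ≠ 0 := by linarith
  have hU := coreU γ
  have hW := coreW γ
  have hid : Tendsto (fun s : ℝ => s) (𝓝[>] (0:ℝ)) (𝓝 0) :=
    tendsto_id.mono_left nhdsWithin_le_nhds
  have hmain : Tendsto (fun s : ℝ => -(1/(γ*(2+γ)*(4+γ)) *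
      (3*Us γ s + 3*γ*Ws γ s + (-22/3*γ - γ^2 + 5/3*γ^3 + γ^4 - 1/3*γ^5)*s
        + ((2+γ^2)*Us γ s + 3*γ*Ws γ s)*s^2 + (-2*γ+3*γ^2-γ^3)*s^3
        + 3*(Us γ s*s^4)))) (𝓝[>] (0:ℝ)) (𝓝 0) := by
    have h := (((((((hU.const_mul 3).add (hW.const_mul (3*γ))).add
      (hid.const_mul (-22/3*γ - γ^2 + 5/3*γ^3 + γ^4 - 1/3*γ^5))).add
      (((hU.const_mul (2+γ^2)).add (hW.const_mul (3*γ))).mul (hid.pow 2))).add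
      ((hid.pow 3).const_mul (-2*γ+3*γ^2-γ^3))).add
      ((hU.mul (hid.pow 4)).const_mul 3)).const_mul (1/(γ*(2+γ)*(4+γ)))).neg
    convert h using 2 <;> norm_num
  apply hmain.congr'
  filter_upwards [mem01] with s hs
  have hs0 : (0:ℝ) < s := hs.1
  have hs0' : s ≠ 0 := ne_of_gt hs0
  have hs1 : (0:ℝ) < 1 - s := by linarith [hs.2]
  unfold F2d Us Ws
  rw [abs_of_pos hs1]
  field_simp
  ring

lemma tendsto_F2_atTop {γ : ℝ} (hγ1 : -1 < γ) (hγ2 : γ < 1) (hγ0 : γ ≠ 0) :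
    Tendsto (F2 γ) atTop (𝓝 (2*(2-γ)/(3*(1+γ)))) := by
  have hγa : 1 + γ ≠ 0 := by linarith
  have hγb : 2 + γ ≠ 0 := by linarith
  have hγc : 4 + γ ≠ 0 := by linarith
  have hU := coreU γ
  have hW := coreW γ
  have hid : Tendsto (fun s : ℝ => s) (𝓝[>] (0:ℝ)) (𝓝 0) :=
    tendsto_id.mono_left nhdsWithin_le_nhds
  have hXY : Tendsto (fun s : ℝ => (1-s)^γ - (1+s)^γ) (𝓝[>] (0:ℝ)) (𝓝 0) := by
    have h := ((tendsto_oneSub_rpow γ).sub (tendsto_oneAdd_rpow γ)).mono_left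
      (nhdsWithin_le_nhds : 𝓝[>] (0:ℝ) ≤ 𝓝 0)
    simpa using h
  have hrpow : Tendsto (fun s : ℝ => s^((3:ℝ)-γ)) (𝓝[>] (0:ℝ)) (𝓝 0) := by
    have hc : ContinuousAt (fun s : ℝ => s^((3:ℝ)-γ)) 0 :=
      Real.continuousAt_rpow_const 0 _ (Or.inr (by linarith))
    have := hc.tendsto.mono_left (nhdsWithin_le_nhds : 𝓝[>] (0:ℝ) ≤ 𝓝 0)
    simpa [Real.zero_rpow (show (3:ℝ)-γ ≠ 0 by linarith)] using this
  have hV : Tendsto (fun s : ℝ =>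
      3*(1+γ)*((1-s)^γ-(1+s)^γ) + 3*(2+γ-γ^2)*(s*(-(γ*(γ-1)*(γ-2)/3) + s*Us γ s))
        + 3*γ*(1+γ)*(s*(γ*(γ-1)+s*Ws γ s)) - 9*Us γ s - 9*γ*Ws γ s)
      (𝓝[>] (0:ℝ)) (𝓝 0) := by
    have h := ((((hXY.const_mul (3*(1+γ))).add
      ((hid.mul ((hid.mul hU).const_add (-(γ*(γ-1)*(γ-2)/3)))).const_mul (3*(2+γ-γ^2)))).add
      ((hid.mul ((hid.mul hW).const_add (γ*(γ-1)))).const_mul (3*γ*(1+γ)))).sub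
      (hU.const_mul 9)).sub (hW.const_mul (9*γ))
    convert h using 2 <;> norm_num
  have hmain : Tendsto (fun s : ℝ => 2*(2-γ)/(3*(1+γ)) +
      s^((3:ℝ)-γ)/(3*γ*(1+γ)*(2+γ)*(4+γ)) *
      (3*(1+γ)*((1-s)^γ-(1+s)^γ) + 3*(2+γ-γ^2)*(s*(-(γ*(γ-1)*(γ-2)/3) + s*Us γ s))
        + 3*γ*(1+γ)*(s*(γ*(γ-1)+s*Ws γ s)) - 9*Us γ s - 9*γ*Ws γ s))
      (𝓝[>] (0:ℝ)) (𝓝 (2*(2-γ)/(3*(1+γ)))) := by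
    have h := ((hrpow.div_const (3*γ*(1+γ)*(2+γ)*(4+γ))).mul hV).const_add (2*(2-γ)/(3*(1+γ)))
    simpa using h
  have heq : (fun s : ℝ => F2 γ (1/s)) =ᶠ[𝓝[>] (0:ℝ)] (fun s : ℝ => 2*(2-γ)/(3*(1+γ)) +
      s^((3:ℝ)-γ)/(3*γ*(1+γ)*(2+γ)*(4+γ)) *
      (3*(1+γ)*((1-s)^γ-(1+s)^γ) + 3*(2+γ-γ^2)*(s*(-(γ*(γ-1)*(γ-2)/3) + s*Us γ s))
        + 3*γ*(1+γ)*(s*(γ*(γ-1)+s*Ws γ s)) - 9*Us γ s - 9*γ*Ws γ s)) := by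
    filter_upwards [mem01] with s hs
    have hs0 : (0:ℝ) < s := hs.1
    have hs0' : s ≠ 0 := ne_of_gt hs0
    have hs1 : (0:ℝ) < 1 - s := by linarith [hs.2]
    have hs2 : (0:ℝ) < 1 + s := by linarith
    have habs : |1 - 1/s| = (1-s)/s := by
      rw [abs_of_neg, neg_sub]
      · field_simp
      · rw [sub_neg]
        rw [lt_div_iff₀ hs0, one_mul]
        exact hs.2
    have e1 : |1-1/s| ^ γ = (1-s)^γ / s^γ := by
      rw [habs, Real.div_rpow (le_of_lt hs1) (le_of_lt hs0)]
    have e2 : ((1:ℝ)+1/s) ^ γ = (1+s)^γ / s^γ := by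
      rw [show (1:ℝ)+1/s = (1+s)/s by field_simp; ring,
        Real.div_rpow (le_of_lt hs2) (le_of_lt hs0)]
    have e3 : s ^ ((3:ℝ)-γ) = s^(3:ℕ) / s^γ := by
      rw [Real.rpow_sub hs0, show (3:ℝ) = ((3:ℕ):ℝ) by norm_num, Real.rpow_natCast]
    have hsγ : s ^ γ ≠ 0 := ne_of_gt (Real.rpow_pos_of_pos hs0 γ)
    unfold F2 Us Ws
    rw [e1, e2, e3]
    set X := (1-s)^γ
    set Y := (1+s)^γ
    set T := s^γ
    field_simp
    ring
  have hcomp := (hmain.congr' heq.symm).comp (tendsto_inv_atTop_nhdsGT_zero (𝕜 := ℝ))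
  apply hcomp.congr'
  filter_upwards [eventually_gt_atTop (0:ℝ)] with t ht
  simp only [Function.comp]
  rw [one_div, inv_inv]


def Pp (γ t : ℝ) : ℝ := 3*t^4+3*γ*t^3+(2+γ^2)*t^2+3*γ*t+3
def Pm (γ t : ℝ) : ℝ := 3*t^4-3*γ*t^3+(2+γ^2)*t^2-3*γ*t+3
def NN (γ t : ℝ) : ℝ := Pp γ t*(1-t)^γ - Pm γ t*(1+t)^γ
def N1f (γ t : ℝ) : ℝ :=
  ((12*t^3+9*γ*t^2+2*(2+γ^2)*t+3*γ)*(1-t)^γ + Pp γ t*(-(γ*(1-t)^(γ-1))))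
  - ((12*t^3-9*γ*t^2+2*(2+γ^2)*t-3*γ)*(1+t)^γ + Pm γ t*(γ*(1+t)^(γ-1)))
def N2f (γ t : ℝ) : ℝ :=
  (36*t^2+18*γ*t+2*(2+γ^2))*(1-t)^γ
  - 2*γ*((12*t^3+9*γ*t^2+2*(2+γ^2)*t+3*γ)*(1-t)^(γ-1))
  + γ*(γ-1)*(Pp γ t*(1-t)^(γ-2))
  - (36*t^2-18*γ*t+2*(2+γ^2))*(1+t)^γ
  - 2*γ*((12*t^3-9*γ*t^2+2*(2+γ^2)*t-3*γ)*(1+t)^(γ-1))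
  - γ*(γ-1)*(Pm γ t*(1+t)^(γ-2))

lemma hasDerivAt_cubic (c0 c1 c2 c3 : ℝ) (x : ℝ) :
    HasDerivAt (fun s : ℝ => c3*s^3+c2*s^2+c1*s+c0) (3*c3*x^2+2*c2*x+c1) x := by
  have h := ((((hasDerivAt_pow 3 x).const_mul c3).add
    ((hasDerivAt_pow 2 x).const_mul c2)).add
    ((hasDerivAt_id' (𝕜 := ℝ) (x := x)).const_mul c1)).add_const c0
  refine h.congr_deriv ?_ <;> push_cast <;> ring

lemma hasDerivAt_quartic (c0 c1 c2 c3 c4 : ℝ) (x : ℝ) :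
    HasDerivAt (fun s : ℝ => c4*s^4+c3*s^3+c2*s^2+c1*s+c0) (4*c4*x^3+3*c3*x^2+2*c2*x+c1) x := by
  have h := (((((hasDerivAt_pow 4 x).const_mul c4).add
    ((hasDerivAt_pow 3 x).const_mul c3)).add
    ((hasDerivAt_pow 2 x).const_mul c2)).add
    ((hasDerivAt_id' (𝕜 := ℝ) (x := x)).const_mul c1)).add_const c0
  refine h.congr_deriv ?_ <;> push_cast <;> ring

lemma dNN (γ : ℝ) {x : ℝ} (h1 : -1 < x) (h2 : x < 1) :
    HasDerivAt (NN γ) (N1f γ x) x := by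
  have hPp : HasDerivAt (fun s : ℝ => 3*s^4+3*γ*s^3+(2+γ^2)*s^2+3*γ*s+3)
      (4*3*x^3+3*(3*γ)*x^2+2*(2+γ^2)*x+3*γ) x := hasDerivAt_quartic 3 (3*γ) (2+γ^2) (3*γ) 3 x
  have hPm : HasDerivAt (fun s : ℝ => 3*s^4-3*γ*s^3+(2+γ^2)*s^2-3*γ*s+3)
      (4*3*x^3+3*(-(3*γ))*x^2+2*(2+γ^2)*x+(-(3*γ))) x := by
    have h := hasDerivAt_quartic 3 (-(3*γ)) (2+γ^2) (-(3*γ)) 3 x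
    convert h using 2 <;> ring
  have h := (hPp.mul (hasDerivAt_oneSub γ h2)).sub (hPm.mul (hasDerivAt_oneAdd γ h1))
  unfold NN Pp Pm
  refine h.congr_deriv ?_
  unfold N1f Pp Pm
  ring

lemma dN1f (γ : ℝ) {x : ℝ} (h1 : -1 < x) (h2 : x < 1) :
    HasDerivAt (N1f γ) (N2f γ x) x := by
  have hcp : HasDerivAt (fun s : ℝ => 12*s^3+9*γ*s^2+2*(2+γ^2)*s+3*γ)
      (3*12*x^2+2*(9*γ)*x+2*(2+γ^2)) x := hasDerivAt_cubic (3*γ) (2*(2+γ^2)) (9*γ) 12 x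
  have hcm : HasDerivAt (fun s : ℝ => 12*s^3-9*γ*s^2+2*(2+γ^2)*s-3*γ)
      (3*12*x^2+2*(-(9*γ))*x+2*(2+γ^2)) x := by
    have h := hasDerivAt_cubic (-(3*γ)) (2*(2+γ^2)) (-(9*γ)) 12 x
    convert h using 2 <;> ring
  have hPp : HasDerivAt (fun s : ℝ => 3*s^4+3*γ*s^3+(2+γ^2)*s^2+3*γ*s+3)
      (4*3*x^3+3*(3*γ)*x^2+2*(2+γ^2)*x+3*γ) x := hasDerivAt_quartic 3 (3*γ) (2+γ^2) (3*γ) 3 x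
  have hPm : HasDerivAt (fun s : ℝ => 3*s^4-3*γ*s^3+(2+γ^2)*s^2-3*γ*s+3)
      (4*3*x^3+3*(-(3*γ))*x^2+2*(2+γ^2)*x+(-(3*γ))) x := by
    have h := hasDerivAt_quartic 3 (-(3*γ)) (2+γ^2) (-(3*γ)) 3 x
    convert h using 2 <;> ring
  have hsub1 := hasDerivAt_oneSub (γ-1) h2
  have hadd1 := hasDerivAt_oneAdd (γ-1) h1
  rw [show γ-1-1 = γ-2 by ring] at hsub1 hadd1
  have h := ((hcp.mul (hasDerivAt_oneSub γ h2)).add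
      (hPp.mul ((hsub1.const_mul γ).neg))).sub
    ((hcm.mul (hasDerivAt_oneAdd γ h1)).add
      (hPm.mul (hadd1.const_mul γ)))
  unfold N1f Pp Pm
  simp only [Pi.add_apply, Pi.sub_apply, Pi.mul_apply, Pi.neg_apply, Pi.div_apply] at h
  refine h.congr_deriv ?_
  unfold N2f Pp Pm
  ring

def S0 (γ x : ℝ) : ℝ :=
  ((1-γ)*(3-γ) - 3*(2-γ)*x + 3*x^2)*(1-x)^(γ-2)
    - ((1-γ)*(3-γ) + 3*(2-γ)*x + 3*x^2)*(1+x)^(γ-2)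

lemma rpow_two_eq {y : ℝ} (_ : (0:ℝ) ≤ y) : y ^ ((2:ℝ)) = y^2 := by
  rw [show (2:ℝ) = ((2:ℕ):ℝ) by norm_num, Real.rpow_natCast]

lemma S0_neg {γ : ℝ} (hγ : 0 < γ) (hγ2 : γ < 1) {x : ℝ} (hx : 0 < x) (hx1 : x < 1) :
    S0 γ x < 0 := by
  have hA : (0:ℝ) < 1 - x := by linarith
  have hB : (0:ℝ) < 1 + x := by linarith
  have hAγ : (0:ℝ) < (1-x)^((2:ℝ)-γ) := Real.rpow_pos_of_pos hA _
  have hBγ : (0:ℝ) < (1+x)^((2:ℝ)-γ) := Real.rpow_pos_of_pos hB _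
  have hρm : (0:ℝ) < (1-γ)*(3-γ) + 3*(2-γ)*x + 3*x^2 := by nlinarith
  have em : (1-x)^(γ-2) = ((1-x)^((2:ℝ)-γ))⁻¹ := by
    rw [show γ-2 = -((2:ℝ)-γ) by ring, Real.rpow_neg hA.le]
  have ep : (1+x)^(γ-2) = ((1+x)^((2:ℝ)-γ))⁻¹ := by
    rw [show γ-2 = -((2:ℝ)-γ) by ring, Real.rpow_neg hB.le]
  unfold S0
  rw [em, ep, ← div_eq_mul_inv, ← div_eq_mul_inv, sub_neg, div_lt_div_iff₀ hAγ hBγ]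
  have h1 : (1+x)^((2:ℝ)-γ) < (1+x)^2 := by
    have := Real.rpow_lt_rpow_of_exponent_lt (show (1:ℝ) < 1+x by linarith)
      (show (2:ℝ)-γ < 2 by linarith)
    rwa [rpow_two_eq hB.le] at this
  have h2 : (1-x)^2 < (1-x)^((2:ℝ)-γ) := by
    have := Real.rpow_lt_rpow_of_exponent_gt hA (by linarith : (1:ℝ)-x < 1)
      (show (2:ℝ)-γ < 2 by linarith)
    rwa [rpow_two_eq hA.le] at this
  rcases le_or_gt ((1-γ)*(3-γ) - 3*(2-γ)*x + 3*x^2) 0 with hρp | hρp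
  · calc ((1-γ)*(3-γ) - 3*(2-γ)*x + 3*x^2) * (1+x)^((2:ℝ)-γ)
        ≤ 0 := mul_nonpos_of_nonpos_of_nonneg hρp hBγ.le
      _ < ((1-γ)*(3-γ) + 3*(2-γ)*x + 3*x^2) * (1-x)^((2:ℝ)-γ) := mul_pos hρm hAγ
  · have key : ((1-γ)*(3-γ) - 3*(2-γ)*x + 3*x^2)*(1+x)^2
        ≤ ((1-γ)*(3-γ) + 3*(2-γ)*x + 3*x^2)*(1-x)^2 := by
      nlinarith [mul_nonneg (mul_nonneg hγ.le hx.le) (show (0:ℝ) ≤ 5-2*γ-3*x^2 by nlinarith)]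
    calc ((1-γ)*(3-γ) - 3*(2-γ)*x + 3*x^2) * (1+x)^((2:ℝ)-γ)
        < ((1-γ)*(3-γ) - 3*(2-γ)*x + 3*x^2) * (1+x)^2 := by
          exact mul_lt_mul_of_pos_left h1 hρp
      _ ≤ ((1-γ)*(3-γ) + 3*(2-γ)*x + 3*x^2) * (1-x)^2 := key
      _ < ((1-γ)*(3-γ) + 3*(2-γ)*x + 3*x^2) * (1-x)^((2:ℝ)-γ) :=
          mul_lt_mul_of_pos_left h2 hρm

lemma S0_pos {γ : ℝ} (hγ : -1 < γ) (hγ2 : γ < 0) {x : ℝ} (hx : 0 < x) (hx1 : x < 1) :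
    0 < S0 γ x := by
  have hA : (0:ℝ) < 1 - x := by linarith
  have hB : (0:ℝ) < 1 + x := by linarith
  have hAγ : (0:ℝ) < (1-x)^((2:ℝ)-γ) := Real.rpow_pos_of_pos hA _
  have hBγ : (0:ℝ) < (1+x)^((2:ℝ)-γ) := Real.rpow_pos_of_pos hB _
  have hρm : (0:ℝ) < (1-γ)*(3-γ) + 3*(2-γ)*x + 3*x^2 := by nlinarith
  have hρp : (0:ℝ) < (1-γ)*(3-γ) - 3*(2-γ)*x + 3*x^2 := by
    nlinarith [sq_nonneg (6*x - 3*(2-γ))]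
  have em : (1-x)^(γ-2) = ((1-x)^((2:ℝ)-γ))⁻¹ := by
    rw [show γ-2 = -((2:ℝ)-γ) by ring, Real.rpow_neg hA.le]
  have ep : (1+x)^(γ-2) = ((1+x)^((2:ℝ)-γ))⁻¹ := by
    rw [show γ-2 = -((2:ℝ)-γ) by ring, Real.rpow_neg hB.le]
  unfold S0
  rw [em, ep, ← div_eq_mul_inv, ← div_eq_mul_inv, sub_pos, div_lt_div_iff₀ hBγ hAγ]
  have h1 : (1+x)^2 < (1+x)^((2:ℝ)-γ) := by
    have := Real.rpow_lt_rpow_of_exponent_lt (show (1:ℝ) < 1+x by linarith)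
      (show (2:ℝ) < 2-γ by linarith)
    rwa [rpow_two_eq hB.le] at this
  have h2 : (1-x)^((2:ℝ)-γ) < (1-x)^2 := by
    have := Real.rpow_lt_rpow_of_exponent_gt hA (by linarith : (1:ℝ)-x < 1)
      (show (2:ℝ) < 2-γ by linarith)
    rwa [rpow_two_eq hA.le] at this
  have key : ((1-γ)*(3-γ) + 3*(2-γ)*x + 3*x^2)*(1-x)^2
      ≤ ((1-γ)*(3-γ) - 3*(2-γ)*x + 3*x^2)*(1+x)^2 := by
    nlinarith [mul_nonneg (mul_nonneg (neg_nonneg.mpr hγ2.le) hx.le)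
      (show (0:ℝ) ≤ 5-2*γ-3*x^2 by nlinarith)]
  calc ((1-γ)*(3-γ) + 3*(2-γ)*x + 3*x^2) * (1-x)^((2:ℝ)-γ)
      < ((1-γ)*(3-γ) + 3*(2-γ)*x + 3*x^2) * (1-x)^2 := mul_lt_mul_of_pos_left h2 hρm
    _ ≤ ((1-γ)*(3-γ) - 3*(2-γ)*x + 3*x^2) * (1+x)^2 := key
    _ < ((1-γ)*(3-γ) - 3*(2-γ)*x + 3*x^2) * (1+x)^((2:ℝ)-γ) :=
        mul_lt_mul_of_pos_left h1 hρp


lemma hhd (γ : ℝ) {x : ℝ} (hx0 : 0 < x) (hx1 : x < 1) :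
    HasDerivAt (fun s => N1f γ s/s) ((2+γ)*(4+γ)*(x*S0 γ x)) x := by
  have hd := (dN1f γ (by linarith) hx1).div (hasDerivAt_id' (𝕜 := ℝ) (x := x)) (ne_of_gt hx0)
  refine hd.congr_deriv ?_
  have hA : (0:ℝ) < 1 - x := by linarith
  have hB : (0:ℝ) < 1 + x := by linarith
  have em1 : (1-x)^(γ-1) = (1-x)^γ/(1-x) := Real.rpow_sub_one (ne_of_gt hA) γ
  have ep1 : (1+x)^(γ-1) = (1+x)^γ/(1+x) := Real.rpow_sub_one (ne_of_gt hB) γ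
  have em2 : (1-x)^(γ-2) = (1-x)^γ/(1-x)^2 := by
    rw [show γ-2 = γ-(2:ℝ) by norm_num, Real.rpow_sub hA, rpow_two_eq hA.le]
  have ep2 : (1+x)^(γ-2) = (1+x)^γ/(1+x)^2 := by
    rw [show γ-2 = γ-(2:ℝ) by norm_num, Real.rpow_sub hB, rpow_two_eq hB.le]
  unfold S0 N2f N1f Pp Pm
  rw [em1, ep1, em2, ep2]
  field_simp
  ring

lemma hlim (γ : ℝ) : Tendsto (fun s => N1f γ s/s) (𝓝[>] (0:ℝ)) (𝓝 0) := by
  have hN10 : N1f γ 0 = 0 := by unfold N1f Pp Pm; norm_num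
  have hd0 : HasDerivAt (N1f γ) (N2f γ 0) 0 := dN1f γ (by norm_num) (by norm_num)
  have hN20 : N2f γ 0 = 0 := by unfold N2f Pp Pm; norm_num; ring
  rw [hN20] at hd0
  have hs := hasDerivAt_iff_tendsto_slope.mp hd0
  have hle : 𝓝[>](0:ℝ) ≤ 𝓝[≠](0:ℝ) :=
    nhdsWithin_mono 0 (fun y hy => ne_of_gt hy)
  apply (hs.mono_left hle).congr'
  filter_upwards [self_mem_nhdsWithin] with y hy
  rw [slope_def_field, hN10]
  simp

lemma F2d_pos_aux {γ : ℝ} (hγ1 : -1 < γ) (hγ2 : γ < 1) (hγ0 : γ ≠ 0)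
    {x : ℝ} (hx : 0 < x) (hx1 : x < 1) : 0 < F2d γ x := by
  have hγb : (0:ℝ) < 2 + γ := by linarith
  have hγc : (0:ℝ) < 4 + γ := by linarith
  have hEq : F2d γ x = -(NN γ x/(γ*(2+γ)*(4+γ)*x^4)) := by
    unfold F2d NN Pp Pm
    rw [abs_of_pos (show (0:ℝ) < 1-x by linarith)]
    ring
  have hcontN : ContinuousOn (NN γ) (Ico 0 1) := fun y hy =>
    ((dNN γ (by linarith [hy.1]) hy.2).continuousAt).continuousWithinAt
  have hconth : ContinuousOn (fun s => N1f γ s/s) (Ioo 0 1) := fun y hy =>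
    ((hhd γ hy.1 hy.2).continuousAt).continuousWithinAt
  have hN0 : NN γ 0 = 0 := by unfold NN Pp Pm; norm_num
  have hlm := hlim γ
  rcases hγ0.lt_or_gt with hneg | hpos
  · -- γ < 0 : N increasing, N > 0, denominator negative
    have hmono : StrictMonoOn (fun s => N1f γ s/s) (Ioo 0 1) := by
      apply strictMonoOn_of_deriv_pos (convex_Ioo 0 1) hconth
      rw [interior_Ioo]
      intro y hy
      rw [(hhd γ hy.1 hy.2).deriv]
      exact mul_pos (mul_pos hγb hγc) (mul_pos hy.1 (S0_pos hγ1 hneg hy.1 hy.2))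
    have h1fpos : ∀ s ∈ Ioo (0:ℝ) 1, 0 < N1f γ s := by
      intro s hs
      have hs2 : s/2 ∈ Ioo (0:ℝ) 1 := ⟨by linarith [hs.1], by linarith [hs.2]⟩
      have h3 : 0 ≤ N1f γ (s/2)/(s/2) := by
        apply le_of_tendsto hlm
        filter_upwards [Ioo_mem_nhdsGT_of_mem (left_mem_Ico.mpr (half_pos hs.1))] with y hy
        exact (hmono ⟨hy.1, by linarith [hy.2, hs2.2]⟩ hs2 hy.2).le
      have h4 : N1f γ (s/2)/(s/2) < N1f γ s/s := hmono hs2 hs (by linarith [hs.1])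
      have h5 : 0 < N1f γ s/s := lt_of_le_of_lt h3 h4
      have h6 : N1f γ s = (N1f γ s/s)*s := (div_mul_cancel₀ _ (ne_of_gt hs.1)).symm
      rw [h6]; exact mul_pos h5 hs.1
    have hNmono : StrictMonoOn (NN γ) (Ico 0 1) := by
      apply strictMonoOn_of_deriv_pos (convex_Ico 0 1) hcontN
      rw [interior_Ico]
      intro y hy
      rw [(dNN γ (by linarith [hy.1]) hy.2).deriv]
      exact h1fpos y hy
    have hNpos : 0 < NN γ x := by
      have := hNmono (left_mem_Ico.mpr one_pos) ⟨hx.le, hx1⟩ hx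
      rwa [hN0] at this
    have hDneg : γ*(2+γ)*(4+γ)*x^4 < 0 := by
      have h4 : (0:ℝ) < (2+γ)*((4+γ)*x^4) := mul_pos hγb (mul_pos hγc (by positivity))
      have he : γ*(2+γ)*(4+γ)*x^4 = γ*((2+γ)*((4+γ)*x^4)) := by ring
      rw [he]; exact mul_neg_of_neg_of_pos hneg h4
    rw [hEq]
    have := div_neg_of_pos_of_neg hNpos hDneg
    linarith
  · -- γ > 0 : N decreasing, N < 0, denominator positive
    have hmono : StrictAntiOn (fun s => N1f γ s/s) (Ioo 0 1) := by
      apply strictAntiOn_of_deriv_neg (convex_Ioo 0 1) hconth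
      rw [interior_Ioo]
      intro y hy
      rw [(hhd γ hy.1 hy.2).deriv]
      have hS := S0_neg hpos hγ2 hy.1 hy.2
      exact mul_neg_of_pos_of_neg (mul_pos hγb hγc) (mul_neg_of_pos_of_neg hy.1 hS)
    have h1fneg : ∀ s ∈ Ioo (0:ℝ) 1, N1f γ s < 0 := by
      intro s hs
      have hs2 : s/2 ∈ Ioo (0:ℝ) 1 := ⟨by linarith [hs.1], by linarith [hs.2]⟩
      have h3 : N1f γ (s/2)/(s/2) ≤ 0 := by
        apply ge_of_tendsto hlm
        filter_upwards [Ioo_mem_nhdsGT_of_mem (left_mem_Ico.mpr (half_pos hs.1))] with y hy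
        exact (hmono ⟨hy.1, by linarith [hy.2, hs2.2]⟩ hs2 hy.2).le
      have h4 : N1f γ s/s < N1f γ (s/2)/(s/2) := hmono hs2 hs (by linarith [hs.1])
      have h5 : N1f γ s/s < 0 := lt_of_lt_of_le h4 h3
      have h6 : N1f γ s = (N1f γ s/s)*s := (div_mul_cancel₀ _ (ne_of_gt hs.1)).symm
      rw [h6]; exact mul_neg_of_neg_of_pos h5 hs.1
    have hNmono : StrictAntiOn (NN γ) (Ico 0 1) := by
      apply strictAntiOn_of_deriv_neg (convex_Ico 0 1) hcontN
      rw [interior_Ico]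
      intro y hy
      rw [(dNN γ (by linarith [hy.1]) hy.2).deriv]
      exact h1fneg y hy
    have hNneg : NN γ x < 0 := by
      have := hNmono (left_mem_Ico.mpr one_pos) ⟨hx.le, hx1⟩ hx
      rwa [hN0] at this
    have hDpos : (0:ℝ) < γ*(2+γ)*(4+γ)*x^4 := by positivity
    rw [hEq]
    have := div_neg_of_neg_of_pos hNneg hDpos
    linarith

lemma part_v {γ : ℝ} (hγ1 : -1 < γ) (hγ2 : γ < 1) (hγ0 : γ ≠ 0)
    {t : ℝ} (ht : 0 < t) (ht1 : t ≠ 1) : 0 < F2d γ t := by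
  rcases lt_or_gt_of_ne ht1 with h | h
  · exact F2d_pos_aux hγ1 hγ2 hγ0 ht h
  · have hinv : 0 < F2d γ (1/t) := by
      apply F2d_pos_aux hγ1 hγ2 hγ0 (by positivity)
      rw [div_lt_one (by linarith)]; linarith
    have hii := part_ii hγ1 hγ2 hγ0 ht ht1
    rw [hii] at hinv
    have hpow : (0:ℝ) < t ^ ((4:ℝ)-γ) := Real.rpow_pos_of_pos ht _
    nlinarith [hpow]

/-- Properties of the auxiliary function `F_{2,γ}` for `γ ∈ (-1,0) ∪ (0,1)`:
(i) the derivative formula, (ii) the symmetry `F'(1/t) = t^{4-γ} F'(t)`,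
(iii) vanishing limits at `0+`, (iv) the limit `2(2-γ)/(3(1+γ))` at `+∞`,
(v) strict positivity of `F'` on `(0,∞)`, (vi) the ODE
`t F_{2,γ}'(t) - (1+γ) F_{2,γ}(t) = t⁻¹ F_{1,γ}'(t) - 2(2-γ)/3`. -/
theorem F2_properties (γ : ℝ) (hγ : γ ∈ Ioo (-1:ℝ) 1) (hγ0 : γ ≠ 0) :
    (∀ t : ℝ, 0 < t → t ≠ 1 → HasDerivAt (F2 γ) (F2d γ t) t) ∧
    (∀ t : ℝ, 0 < t → t ≠ 1 → F2d γ (1/t) = t ^ (4 - γ) * F2d γ t) ∧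
    (Tendsto (F2 γ) (nhdsWithin 0 (Ioi 0)) (nhds 0) ∧
      Tendsto (F2d γ) (nhdsWithin 0 (Ioi 0)) (nhds 0)) ∧
    Tendsto (F2 γ) atTop (nhds (2*(2-γ)/(3*(1+γ)))) ∧
    (∀ t : ℝ, 0 < t → t ≠ 1 → 0 < F2d γ t) ∧
    (∀ t : ℝ, 0 < t → t ≠ 1 →
      t * deriv (F2 γ) t - (1+γ) * F2 γ t = t⁻¹ * deriv (F1 γ) t - 2*(2-γ)/3) := by
  obtain ⟨hγ1, hγ2⟩ := hγ
  refine ⟨?_, ?_, ⟨?_, ?_⟩, ?_, ?_, ?_⟩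
  · intro t ht ht1; exact hasDerivAt_F2 hγ1 hγ2 hγ0 ht ht1
  · intro t ht ht1; exact part_ii hγ1 hγ2 hγ0 ht ht1
  · exact tendsto_F2_zero hγ1 hγ2 hγ0
  · exact tendsto_F2d_zero hγ1 hγ2 hγ0
  · exact tendsto_F2_atTop hγ1 hγ2 hγ0
  · intro t ht ht1; exact part_v hγ1 hγ2 hγ0 ht ht1
  · intro t ht ht1
    rw [(hasDerivAt_F2 hγ1 hγ2 hγ0 ht ht1).deriv, (hasDerivAt_F1' hγ1 hγ0 ht ht1).deriv]
    exact part_vi hγ1 hγ2 hγ0 ht ht1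

end GSQGaux
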